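/- Under the hypotheses of the previous statement, if additionally b' + b'' = b - 1, then W can be written as W = W₁ ∘ W₂ with d(P, W) = d(P₁, W₁) + d(P₂, W₂), and d(P₁, W₁) ≤ b' or d(P₂, W₂) ≤ b''. -/
import Mathlib


/-- The generalized distance induced by a set of weighted operations `(Op, w)`. -/
noncomputable def gdist {α : Type*} (Op : Set (List α × List α))
    (w : List α × List α → ℕ) (V W : List α) : ℕ∞ :=
  sInf {n : ℕ∞ | ∃ al : List (List α × List α), (∀ op ∈ al, op ∈ Op) ∧
    (al.map Prod.fst).flatten = V ∧ (al.map Prod.snd).flatten = W ∧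
    n = ((al.map w).sum : ℕ∞)}

lemma gdist_le_align {α : Type*} (Op : Set (List α × List α))
    (w : List α × List α → ℕ) {V W : List α}
    (al : List (List α × List α)) (hal : ∀ op ∈ al, op ∈ Op)
    (hV : (al.map Prod.fst).flatten = V) (hW : (al.map Prod.snd).flatten = W) :
    gdist Op w V W ≤ ((al.map w).sum : ℕ∞) :=
  sInf_le ⟨al, hal, hV, hW, rfl⟩

lemma gdist_exists {α : Type*} (Op : Set (List α × List α))
    (w : List α × List α → ℕ) (V W : List α)
    (h : gdist Op w V W ≠ ⊤) :
    ∃ al : List (List α × List α), (∀ op ∈ al, op ∈ Op) ∧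
      (al.map Prod.fst).flatten = V ∧ (al.map Prod.snd).flatten = W ∧
      gdist Op w V W = ((al.map w).sum : ℕ∞) := by
  classical
  set S : Set ℕ∞ := {n : ℕ∞ | ∃ al : List (List α × List α), (∀ op ∈ al, op ∈ Op) ∧
    (al.map Prod.fst).flatten = V ∧ (al.map Prod.snd).flatten = W ∧
    n = ((al.map w).sum : ℕ∞)} with hS
  have hSne : S.Nonempty := by
    by_contra hemp
    rw [Set.not_nonempty_iff_eq_empty] at hemp
    apply h
    rw [show gdist Op w V W = sInf S from rfl, hemp, sInf_empty]
  set T : Set ℕ := {n : ℕ | ∃ al : List (List α × List α), (∀ op ∈ al, op ∈ Op) ∧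
    (al.map Prod.fst).flatten = V ∧ (al.map Prod.snd).flatten = W ∧
    (al.map w).sum = n} with hT
  have hTne : T.Nonempty := by
    obtain ⟨x, al, h1, h2, h3, h4⟩ := hSne
    exact ⟨(al.map w).sum, al, h1, h2, h3, rfl⟩
  have hmem : sInf T ∈ T := Nat.sInf_mem hTne
  rw [hT] at hmem
  obtain ⟨al, h1, h2, h3, h4⟩ := hmem
  refine ⟨al, h1, h2, h3, le_antisymm ?_ ?_⟩
  · exact gdist_le_align Op w al h1 h2 h3
  · apply le_sInf
    rintro x ⟨al', g1, g2, g3, g4⟩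
    have : sInf T ≤ (al'.map w).sum := Nat.sInf_le ⟨al', g1, g2, g3, rfl⟩
    rw [g4, h4]
    exact_mod_cast this.trans (by omega)

lemma take_flatten_len {α : Type*} :
    ∀ (al : List (List α × List α)), (∀ op ∈ al, op.1.length ≤ 1) →
    ∀ m, m ≤ ((al.map Prod.fst).flatten).length →
    ∃ k, (((al.take k).map Prod.fst).flatten).length = m
  | [], _, m, hm => ⟨0, by simp at hm ⊢; omega⟩
  | op :: rest, hlen, m, hm => by
    rcases Nat.eq_zero_or_pos m with h0 | hpos
    · exact ⟨0, by simp [h0]⟩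
    · have h1 : op.1.length ≤ m := le_trans (hlen op (by simp)) hpos
      have hm' : m - op.1.length ≤ ((rest.map Prod.fst).flatten).length := by
        simp only [List.map_cons, List.flatten_cons, List.length_append] at hm; omega
      obtain ⟨k, hk⟩ := take_flatten_len rest (fun o ho => hlen o (by simp [ho])) _ hm'
      refine ⟨k + 1, ?_⟩
      rw [List.take_succ_cons]
      simp only [List.map_cons, List.flatten_cons, List.length_append, hk]
      omega

/-- additionally, if `b' + b'' = b - 1`, the splitting satisfies
`d(P₁, W₁) ≤ b'` or `d(P₂, W₂) ≤ b''`. -/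
theorem gdist_split_bound {α : Type*} (Op : Set (List α × List α))
    (w : List α × List α → ℕ)
    (hId : ∀ σ : α, ([σ], [σ]) ∈ Op)
    (hw : ∀ op ∈ Op, (w op = 0 ↔ ∃ σ : α, op = ([σ], [σ])))
    (hOp : ∀ op ∈ Op, op.1.length ≤ 1)
    (b b' b'' : ℕ) (hb : b' + b'' = b - 1)
    (P₁ P₂ W : List α)
    (h : gdist Op w (P₁ ++ P₂) W ≤ (b : ℕ∞)) :
    ∃ W₁ W₂ : List α, W = W₁ ++ W₂ ∧
      gdist Op w (P₁ ++ P₂) W = gdist Op w P₁ W₁ + gdist Op w P₂ W₂ ∧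
      (gdist Op w P₁ W₁ ≤ (b' : ℕ∞) ∨ gdist Op w P₂ W₂ ≤ (b'' : ℕ∞)) := by
  have hne : gdist Op w (P₁ ++ P₂) W ≠ ⊤ := by
    intro ht
    rw [ht] at h
    exact absurd h (by simp)
  obtain ⟨al, hal, hP, hW, heq⟩ := gdist_exists Op w _ _ hne
  -- find split point
  obtain ⟨k, hk⟩ := take_flatten_len al (fun op hop => hOp op (hal op hop)) P₁.length
    (by rw [hP]; simp)
  set al₁ := al.take k with hal₁
  set al₂ := al.drop k with hal₂
  have halsplit : al = al₁ ++ al₂ := (List.take_append_drop k al).symm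
  have hPsplit : ((al₁.map Prod.fst).flatten) ++ ((al₂.map Prod.fst).flatten) = P₁ ++ P₂ := by
    rw [← List.flatten_append, ← List.map_append, ← halsplit, hP]
  obtain ⟨hP₁, hP₂⟩ := List.append_inj hPsplit hk
  set W₁ := (al₁.map Prod.snd).flatten with hW₁
  set W₂ := (al₂.map Prod.snd).flatten with hW₂
  have hWsplit : W = W₁ ++ W₂ := by
    rw [hW₁, hW₂, ← List.flatten_append, ← List.map_append, ← halsplit, hW]
  have hmem₁ : ∀ op ∈ al₁, op ∈ Op := fun op hop => hal op (by rw [halsplit]; simp [hop])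
  have hmem₂ : ∀ op ∈ al₂, op ∈ Op := fun op hop => hal op (by rw [halsplit]; simp [hop])
  have hd₁ : gdist Op w P₁ W₁ ≤ ((al₁.map w).sum : ℕ∞) :=
    gdist_le_align Op w al₁ hmem₁ hP₁ rfl
  have hd₂ : gdist Op w P₂ W₂ ≤ ((al₂.map w).sum : ℕ∞) :=
    gdist_le_align Op w al₂ hmem₂ hP₂ rfl
  -- get optimal alignments for the pieces
  obtain ⟨c₁, g11, g12, g13, g14⟩ := gdist_exists Op w P₁ W₁
    (fun ht => by rw [ht] at hd₁; exact (WithTop.natCast_ne_top _) (top_le_iff.mp hd₁))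
  obtain ⟨c₂, g21, g22, g23, g24⟩ := gdist_exists Op w P₂ W₂
    (fun ht => by rw [ht] at hd₂; exact (WithTop.natCast_ne_top _) (top_le_iff.mp hd₂))
  have hconcat : gdist Op w (P₁ ++ P₂) W ≤ (((c₁ ++ c₂).map w).sum : ℕ∞) := by
    apply gdist_le_align
    · intro op hop
      rcases List.mem_append.mp hop with h' | h'
      · exact g11 op h'
      · exact g21 op h'
    · rw [List.map_append, List.flatten_append, g12, g22]
    · rw [List.map_append, List.flatten_append, g13, g23, hWsplit]
  have hsum : (al.map w).sum = (al₁.map w).sum + (al₂.map w).sum := by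
    conv_lhs => rw [halsplit]
    simp
  have hconcat' : gdist Op w (P₁ ++ P₂) W ≤ gdist Op w P₁ W₁ + gdist Op w P₂ W₂ := by
    refine hconcat.trans ?_
    rw [g14, g24]
    simp
  have hge : gdist Op w P₁ W₁ + gdist Op w P₂ W₂ ≤ gdist Op w (P₁ ++ P₂) W := by
    rw [heq, hsum, Nat.cast_add]
    exact add_le_add hd₁ hd₂
  have heq2 : gdist Op w (P₁ ++ P₂) W = gdist Op w P₁ W₁ + gdist Op w P₂ W₂ :=
    le_antisymm hconcat' hge
  refine ⟨W₁, W₂, hWsplit, heq2, ?_⟩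
  -- the bound, via naturals
  have hnat : (c₁.map w).sum + (c₂.map w).sum ≤ b := by
    have : gdist Op w P₁ W₁ + gdist Op w P₂ W₂ ≤ (b : ℕ∞) := heq2 ▸ h
    rw [g14, g24] at this
    exact_mod_cast this
  rw [g14, g24]
  rcases (by omega : (c₁.map w).sum ≤ b' ∨ (c₂.map w).sum ≤ b'') with h' | h'
  · exact Or.inl (by exact_mod_cast h')
  · exact Or.inr (by exact_mod_cast h')
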